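/- Let A be a positive bounded self-adjoint operator on a nonzero right quaternionic Hilbert space. Then m(A) and M(A) belong to the S-spectrum of A, i.e., (A − m(A)I)² and (A − M(A)I)² are not boundedly invertible. -/

import Mathlib

noncomputable section

open MulOpposite

abbrev Quat := Quaternion ℝ

class RQH (V : Type*) [NormedAddCommGroup V] [Module Quatᵐᵒᵖ V] where
  inn : V → V → Quat
  conj_symm : ∀ φ ψ : V, star (inn φ ψ) = inn ψ φ
  add_right : ∀ φ ψ ω : V, inn φ (ψ + ω) = inn φ ψ + inn φ ω
  smul_right : ∀ (φ ψ : V) (q : Quat), inn φ (op q • ψ) = inn φ ψ * q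
  norm_sq : ∀ φ : V, inn φ φ = ((‖φ‖ ^ 2 : ℝ) : Quat)

open RQH

variable {V : Type*} [NormedAddCommGroup V] [Module Quatᵐᵒᵖ V] [CompleteSpace V] [RQH V]

def IsBddRL (A : V → V) : Prop :=
  (∀ x y : V, A (x + y) = A x + A y) ∧
  (∀ (q : Quatᵐᵒᵖ) (x : V), A (q • x) = q • A x) ∧
  (∃ C : ℝ, ∀ x : V, ‖A x‖ ≤ C * ‖x‖)

def IsSA (A : V → V) : Prop := ∀ φ ψ : V, inn (A φ) ψ = inn φ (A ψ)

def IsPos (A : V → V) : Prop := ∀ φ : V, ∃ r : ℝ, 0 ≤ r ∧ inn (A φ) φ = (r : Quat)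

def opN (A : V → V) : ℝ := sSup { r : ℝ | ∃ φ : V, ‖φ‖ = 1 ∧ r = ‖A φ‖ }

def mA (A : V → V) : ℝ := sInf { r : ℝ | ∃ φ : V, ‖φ‖ = 1 ∧ r = (inn (A φ) φ).re }

def MA (A : V → V) : ℝ := sSup { r : ℝ | ∃ φ : V, ‖φ‖ = 1 ∧ r = (inn (A φ) φ).re }

def Rq (A : V → V) (l : Quat) (ψ : V) : V :=
  A (A ψ) - op ((2 * l.re : ℝ) : Quat) • A ψ + op ((‖l‖ ^ 2 : ℝ) : Quat) • ψ

def SInv (T : V → V) : Prop :=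
  ∃ B : V → V, IsBddRL B ∧ (∀ x, T (B x) = x) ∧ (∀ x, B (T x) = x)

def sspec (A : V → V) : Set Quat := { l | ¬ SInv (Rq A l) }

set_option linter.unusedSectionVars false
section Aux
variable {V : Type*} [NormedAddCommGroup V] [Module Quatᵐᵒᵖ V] [CompleteSpace V] [RQH V]

lemma inn_add_left (φ ψ ω : V) : inn (φ + ψ) ω = inn φ ω + inn ψ ω := by
  rw [← conj_symm, add_right, star_add, conj_symm, conj_symm]

lemma inn_smul_left (φ ψ : V) (q : Quat) : inn (op q • φ) ψ = star q * inn φ ψ := by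
  rw [← conj_symm, smul_right, star_mul, conj_symm]

lemma inn_zero_right (φ : V) : inn φ (0 : V) = 0 := by
  have := add_right φ (0:V) (0:V)
  simpa using this.symm

lemma inn_zero_left (φ : V) : inn (0 : V) φ = 0 := by
  rw [← conj_symm, inn_zero_right, star_zero]

lemma inn_neg_right (φ ψ : V) : inn φ (-ψ) = -inn φ ψ := by
  have h : (-ψ : V) = op (-1 : Quat) • ψ := by
    rw [op_neg, op_one, neg_smul, one_smul]
  rw [h, smul_right, mul_neg_one]

lemma inn_neg_left (φ ψ : V) : inn (-φ) ψ = -inn φ ψ := by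
  rw [← conj_symm, inn_neg_right, star_neg, conj_symm]

lemma inn_sub_right (φ ψ ω : V) : inn φ (ψ - ω) = inn φ ψ - inn φ ω := by
  rw [sub_eq_add_neg, add_right, inn_neg_right, sub_eq_add_neg]

lemma inn_sub_left (φ ψ ω : V) : inn (φ - ψ) ω = inn φ ω - inn ψ ω := by
  rw [sub_eq_add_neg, inn_add_left, inn_neg_left, sub_eq_add_neg]

lemma norm_op_smul (q : Quat) (ψ : V) : ‖op q • ψ‖ = ‖q‖ * ‖ψ‖ := by
  have h1 : inn (op q • ψ) (op q • ψ) = ((‖op q • ψ‖^2 : ℝ) : Quat) := norm_sq _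
  rw [smul_right, inn_smul_left, norm_sq] at h1
  have h2 := congrArg norm h1
  simp only [norm_mul, Quaternion.norm_coe, norm_star, Real.norm_eq_abs, abs_pow, abs_norm] at h2
  nlinarith [norm_nonneg (op q • ψ), norm_nonneg q, norm_nonneg ψ,
    mul_nonneg (norm_nonneg q) (norm_nonneg ψ)]

lemma re_le_norm (q : Quat) : q.re ≤ ‖q‖ := by
  have h : Quaternion.normSq q = ‖q‖ * ‖q‖ := Quaternion.normSq_eq_norm_mul_self q
  have h2 : Quaternion.normSq q = q.re*q.re + q.imI*q.imI + q.imJ*q.imJ + q.imK*q.imK := by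
    simp [Quaternion.normSq_def']; ring
  nlinarith [norm_nonneg q, sq_nonneg q.imI, sq_nonneg q.imJ, sq_nonneg q.imK, sq_nonneg (q.re - ‖q‖)]

end Aux
set_option linter.unusedSectionVars false

lemma quad_nonneg (a b d : ℝ) (ha : 0 ≤ a) (hb : 0 ≤ b)
    (h : ∀ t : ℝ, 0 ≤ a*t^2 - 2*b*t + d) : b^2 ≤ a*d := by
  have hd : 0 ≤ d := by have := h 0; linarith
  rcases eq_or_lt_of_le hb with hb0 | hb0
  · nlinarith
  rcases eq_or_lt_of_le ha with ha0 | ha0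
  · exfalso
    have := h ((d+1)/(2*b))
    rw [← ha0] at this
    have h2 : 2*b*((d+1)/(2*b)) = d+1 := by field_simp
    nlinarith
  · have := h (b/a)
    have h2 : a*(b/a)^2 = b^2/a := by field_simp
    have h3 : 2*b*(b/a) = 2*(b^2/a) := by field_simp
    rw [h2, h3] at this
    have h5 : b^2/a ≤ d := by linarith
    calc b^2 = (b^2/a)*a := by field_simp
    _ ≤ d*a := by apply mul_le_mul_of_nonneg_right h5 ha
    _ = a*d := by ring

section CS
variable {V : Type*} [NormedAddCommGroup V] [Module Quatᵐᵒᵖ V] [CompleteSpace V] [RQH V]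

lemma cs_pos (B : V → V) (hadd : ∀ x y : V, B (x+y) = B x + B y)
    (hsmul : ∀ (q : Quatᵐᵒᵖ) (x : V), B (q • x) = q • B x)
    (hsa : IsSA B) (hpos : IsPos B) (φ ψ : V) :
    ‖inn (B φ) ψ‖^2 ≤ (inn (B φ) φ).re * (inn (B ψ) ψ).re := by
  obtain ⟨rφ, hrφ0, hrφ⟩ := hpos φ
  obtain ⟨rψ, hrψ0, hrψ⟩ := hpos ψ
  set c : Quat := inn (B φ) ψ with hc
  have hreφ : (inn (B φ) φ).re = rφ := by rw [hrφ, Quaternion.re_coe]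
  have hreψ : (inn (B ψ) ψ).re = rψ := by rw [hrψ, Quaternion.re_coe]
  rw [hreφ, hreψ]
  have hstar : inn (B ψ) φ = star c := by
    rw [hc, ← conj_symm, hsa]
  have key : ∀ t : ℝ, 0 ≤ (rψ*‖c‖^2)*t^2 - 2*(‖c‖^2)*t + rφ := by
    intro t
    set q : Quat := ((-t : ℝ) : Quat) * star c with hq
    set χ : V := φ + op q • ψ with hχ
    obtain ⟨s, hs0, hsχ⟩ := hpos χ
    have hBχ : B χ = B φ + op q • B ψ := by
      rw [hχ, hadd, hsmul]
    have expand : inn (B χ) χ =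
        inn (B φ) φ + c * q + star q * star c + star q * (((rψ:ℝ):Quat) * q) := by
      rw [hχ, hBχ, inn_add_left, add_right, add_right, smul_right, inn_smul_left,
        inn_smul_left, smul_right, hstar, ← hc, hrψ]
      abel
    have e1 : c * q = ((-t * (‖c‖*‖c‖) : ℝ) : Quat) := by
      rw [hq, ← mul_assoc, ← Quaternion.coe_commutes, mul_assoc,
        Quaternion.self_mul_star, Quaternion.normSq_eq_norm_mul_self, ← Quaternion.coe_mul]
    have e2 : star q * star c = ((-t * (‖c‖*‖c‖) : ℝ) : Quat) := by
      rw [← star_mul, e1, Quaternion.star_coe]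
    have hnq : ‖q‖*‖q‖ = t^2*(‖c‖*‖c‖) := by
      rw [hq, norm_mul, Quaternion.norm_coe, norm_star, Real.norm_eq_abs, abs_neg]
      have := abs_mul_abs_self t
      nlinarith [abs_nonneg t, norm_nonneg c]
    have e3 : star q * (((rψ:ℝ):Quat) * q) = ((rψ * (t^2*(‖c‖*‖c‖)) : ℝ) : Quat) := by
      rw [← mul_assoc, ← Quaternion.coe_commutes, mul_assoc,
        Quaternion.star_mul_self, Quaternion.normSq_eq_norm_mul_self, hnq,
        ← Quaternion.coe_mul]
    rw [hsχ, hrφ, e1, e2, e3] at expand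
    have expand' : s = rφ + -t*(‖c‖*‖c‖) + -t*(‖c‖*‖c‖) + rψ*(t^2*(‖c‖*‖c‖)) := by
      apply Quaternion.coe_injective
      push_cast
      push_cast at expand
      exact expand
    nlinarith [hs0, sq_nonneg (‖c‖)]
  have hq := quad_nonneg (rψ*‖c‖^2) (‖c‖^2) rφ
    (by positivity) (by positivity) key
  rcases eq_or_lt_of_le (norm_nonneg c) with h0 | h0
  · rw [← h0]
    simpa using mul_nonneg hrφ0 hrψ0
  · have h1 : 0 < ‖c‖^2 := by positivity
    nlinarith [h1, hq]

end CS
section Main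
variable {V : Type*} [NormedAddCommGroup V] [Module Quatᵐᵒᵖ V] [CompleteSpace V] [RQH V]

lemma cs_inn (φ ψ : V) : ‖inn φ ψ‖ ≤ ‖φ‖ * ‖ψ‖ := by
  have h := cs_pos (V := V) id (fun _ _ => rfl) (fun _ _ => rfl)
    (fun _ _ => rfl) (fun φ => ⟨‖φ‖^2, sq_nonneg _, norm_sq φ⟩) φ ψ
  simp only [id] at h
  have h1 : (inn φ φ).re = ‖φ‖^2 := by rw [norm_sq, Quaternion.re_coe]
  have h2 : (inn ψ ψ).re = ‖ψ‖^2 := by rw [norm_sq, Quaternion.re_coe]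
  rw [h1, h2] at h
  nlinarith [norm_nonneg (inn φ ψ), norm_nonneg φ, norm_nonneg ψ,
    mul_nonneg (norm_nonneg φ) (norm_nonneg ψ)]

lemma bound_sq (B : V → V) (hadd : ∀ x y : V, B (x+y) = B x + B y)
    (hsmul : ∀ (q : Quatᵐᵒᵖ) (x : V), B (q • x) = q • B x)
    (hsa : IsSA B) (hpos : IsPos B) (C : ℝ) (hC0 : 0 ≤ C)
    (hC : ∀ x, ‖B x‖ ≤ C * ‖x‖) (φ : V) :
    ‖B φ‖^2 ≤ C * (inn (B φ) φ).re := by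
  have h := cs_pos B hadd hsmul hsa hpos φ (B φ)
  have h1 : ‖inn (B φ) (B φ)‖ = ‖B φ‖^2 := by
    rw [norm_sq, Quaternion.norm_coe, Real.norm_eq_abs, abs_of_nonneg (sq_nonneg _)]
  have h2 : (inn (B (B φ)) (B φ)).re ≤ C * ‖B φ‖^2 := by
    calc (inn (B (B φ)) (B φ)).re ≤ ‖inn (B (B φ)) (B φ)‖ := re_le_norm _
    _ ≤ ‖B (B φ)‖ * ‖B φ‖ := cs_inn _ _
    _ ≤ (C * ‖B φ‖) * ‖B φ‖ := by
        apply mul_le_mul_of_nonneg_right (hC _) (norm_nonneg _)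
    _ = C * ‖B φ‖^2 := by ring
  have h3 : 0 ≤ (inn (B φ) φ).re := by
    obtain ⟨r, hr0, hr⟩ := hpos φ
    rw [hr, Quaternion.re_coe]; exact hr0
  rw [h1] at h
  rcases eq_or_lt_of_le (norm_nonneg (B φ)) with h0 | h0
  · rw [← h0]
    simpa using mul_nonneg hC0 h3
  · have h4 : 0 < ‖B φ‖^2 := by positivity
    nlinarith [mul_le_mul_of_nonneg_left h2 h3]

lemma not_SInv (B T : V → V) (hT : ∀ ψ, T ψ = B (B ψ))
    (hadd : ∀ x y : V, B (x+y) = B x + B y)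
    (hsmul : ∀ (q : Quatᵐᵒᵖ) (x : V), B (q • x) = q • B x)
    (hsa : IsSA B) (hpos : IsPos B) (C : ℝ) (hC0 : 0 ≤ C)
    (hC : ∀ x, ‖B x‖ ≤ C * ‖x‖)
    (happrox : ∀ ε : ℝ, 0 < ε → ∃ φ : V, ‖φ‖ = 1 ∧ (inn (B φ) φ).re < ε) :
    ¬ SInv T := by
  rintro ⟨G, ⟨_, _, K, hK⟩, hTG, hGT⟩
  set K' := |K| with hK'def
  have hK'0 : 0 ≤ K' := abs_nonneg K
  have hK' : ∀ x, ‖G x‖ ≤ K' * ‖x‖ := fun x =>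
    (hK x).trans (mul_le_mul_of_nonneg_right (le_abs_self K) (norm_nonneg x))
  set E := (K'*C)^2 * C with hEdef
  have hE0 : 0 ≤ E := by positivity
  obtain ⟨φ, hφ1, hφ2⟩ := happrox (1/(E+1)) (by positivity)
  have hre0 : 0 ≤ (inn (B φ) φ).re := by
    obtain ⟨r, hr0, hr⟩ := hpos φ
    rw [hr, Quaternion.re_coe]; exact hr0
  have h1 : (1:ℝ) ≤ K' * ‖T φ‖ := by
    calc (1:ℝ) = ‖φ‖ := hφ1.symm
    _ = ‖G (T φ)‖ := by rw [hGT]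
    _ ≤ K' * ‖T φ‖ := hK' _
  have h2 : ‖T φ‖ ≤ C * ‖B φ‖ := by rw [hT]; exact hC (B φ)
  have h3 : ‖B φ‖^2 ≤ C * (inn (B φ) φ).re := bound_sq B hadd hsmul hsa hpos C hC0 hC φ
  have h5 : (1:ℝ) ≤ K' * (C * ‖B φ‖) :=
    h1.trans (mul_le_mul_of_nonneg_left h2 hK'0)
  have h6 : (1:ℝ) ≤ (K'*C)^2 * ‖B φ‖^2 := by nlinarith [h5]
  have h7 : (1:ℝ) ≤ E * (inn (B φ) φ).re := by
    calc (1:ℝ) ≤ (K'*C)^2 * ‖B φ‖^2 := h6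
    _ ≤ (K'*C)^2 * (C * (inn (B φ) φ).re) :=
        mul_le_mul_of_nonneg_left h3 (sq_nonneg _)
    _ = E * (inn (B φ) φ).re := by rw [hEdef]; ring
  have h8 : E * (inn (B φ) φ).re ≤ E * (1/(E+1)) :=
    mul_le_mul_of_nonneg_left (le_of_lt hφ2) hE0
  have h9 : E * (1/(E+1)) < 1 := by
    rw [mul_one_div, div_lt_one (by positivity)]
    linarith
  linarith

end Main
section Inst
variable {V : Type*} [NormedAddCommGroup V] [Module Quatᵐᵒᵖ V] [CompleteSpace V] [RQH V]

lemma additive_zero {f : V → V} (hadd : ∀ x y : V, f (x+y) = f x + f y) : f 0 = 0 := by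
  have := hadd 0 0; simpa using this

lemma additive_neg {f : V → V} (hadd : ∀ x y : V, f (x+y) = f x + f y) (x : V) :
    f (-x) = - f x := by
  have h : f x + f (-x) = 0 := by
    rw [← hadd]; simp [additive_zero hadd]
  exact eq_neg_of_add_eq_zero_right h

lemma additive_sub {f : V → V} (hadd : ∀ x y : V, f (x+y) = f x + f y) (x y : V) :
    f (x - y) = f x - f y := by
  rw [sub_eq_add_neg, hadd, additive_neg hadd, sub_eq_add_neg]

lemma op_coe_comm (r : ℝ) (q : Quatᵐᵒᵖ) :
    op ((r : ℝ) : Quat) * q = q * op ((r : ℝ) : Quat) := by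
  rw [← op_unop q, ← op_mul, ← op_mul, Quaternion.coe_commutes]

lemma op_coe_smul_comm (r : ℝ) (q : Quatᵐᵒᵖ) (x : V) :
    op ((r : ℝ) : Quat) • (q • x) = q • (op ((r : ℝ) : Quat) • x) := by
  rw [smul_smul, smul_smul, op_coe_comm]

end Inst
section NotInv
variable {V : Type*} [NormedAddCommGroup V] [Module Quatᵐᵒᵖ V] [CompleteSpace V] [RQH V]

lemma notinv (A : V → V) (hadd : ∀ x y : V, A (x+y) = A x + A y)
    (hsmul : ∀ (q : Quatᵐᵒᵖ) (x : V), A (q • x) = q • A x)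
    (C : ℝ) (hC0 : 0 ≤ C) (hC : ∀ x, ‖A x‖ ≤ C * ‖x‖)
    (hsa : IsSA A) (μ : ℝ) (B : V → V)
    (hBdef : (∀ ψ, B ψ = A ψ - op ((μ : ℝ) : Quat) • ψ) ∨
      (∀ ψ : V, B ψ = op ((μ : ℝ) : Quat) • ψ - A ψ))
    (hBpos : IsPos B)
    (happrox : ∀ ε : ℝ, 0 < ε → ∃ φ : V, ‖φ‖ = 1 ∧ (inn (B φ) φ).re < ε) :
    ¬ SInv (Rq A ((μ : ℝ) : Quat)) := by
  set B0 : V → V := fun ψ => A ψ - op ((μ : ℝ) : Quat) • ψ with hB0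
  have B0add : ∀ x y : V, B0 (x+y) = B0 x + B0 y := by
    intro x y
    simp only [hB0, hadd, smul_add]
    abel
  have B0smul : ∀ (q : Quatᵐᵒᵖ) (x : V), B0 (q • x) = q • B0 x := by
    intro q x
    simp only [hB0, hsmul, op_coe_smul_comm, smul_sub]
  have B0sa : IsSA B0 := by
    intro φ ψ
    simp only [hB0, inn_sub_left, inn_sub_right, inn_smul_left, smul_right,
      Quaternion.star_coe, hsa φ ψ, Quaternion.coe_commutes]
  have B0C : ∀ x : V, ‖B0 x‖ ≤ (C + |μ|) * ‖x‖ := by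
    intro x
    calc ‖B0 x‖ ≤ ‖A x‖ + ‖op ((μ : ℝ) : Quat) • x‖ := norm_sub_le _ _
    _ ≤ C * ‖x‖ + |μ| * ‖x‖ := by
        rw [norm_op_smul, Quaternion.norm_coe, Real.norm_eq_abs]
        exact add_le_add_left (hC x) _
    _ = (C + |μ|) * ‖x‖ := by ring
  have hBB0 : (∀ ψ, B ψ = B0 ψ) ∨ (∀ ψ, B ψ = - B0 ψ) := by
    rcases hBdef with h | h
    · left; intro ψ; rw [h]
    · right; intro ψ; rw [h]; simp only [hB0]; rw [neg_sub]
  have Badd : ∀ x y : V, B (x+y) = B x + B y := by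
    rcases hBB0 with h | h <;> intro x y <;> simp only [h, B0add] <;> abel
  have Bsmul : ∀ (q : Quatᵐᵒᵖ) (x : V), B (q • x) = q • B x := by
    rcases hBB0 with h | h <;> intro q x <;> simp only [h, B0smul, smul_neg]
  have Bsa : IsSA B := by
    rcases hBB0 with h | h <;> intro φ ψ <;>
      simp only [h, inn_neg_left, inn_neg_right, B0sa φ ψ]
  have BC : ∀ x : V, ‖B x‖ ≤ (C + |μ|) * ‖x‖ := by
    rcases hBB0 with h | h <;> intro x
    · rw [h]; exact B0C x
    · rw [h, norm_neg]; exact B0C x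
  have hBBsq : ∀ ψ, B (B ψ) = B0 (B0 ψ) := by
    rcases hBB0 with h | h <;> intro ψ
    · rw [h, h]
    · rw [h, h, additive_neg B0add, neg_neg]
  have hT : ∀ ψ, Rq A ((μ : ℝ) : Quat) ψ = B (B ψ) := by
    intro ψ
    rw [hBBsq]
    have h1 : B0 (B0 ψ) = A (A ψ) - op ((μ : ℝ) : Quat) • A ψ - op ((μ : ℝ) : Quat) • A ψ
        + op ((μ : ℝ) : Quat) • op ((μ : ℝ) : Quat) • ψ := by
      simp only [hB0]
      rw [additive_sub hadd, hsmul, smul_sub]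
      abel
    rw [h1]
    simp only [Rq]
    have h2 : ((2 * (((μ : ℝ) : Quat)).re : ℝ) : Quat) = ((μ : ℝ) : Quat) + ((μ : ℝ) : Quat) := by
      rw [Quaternion.re_coe, two_mul]; push_cast; rfl
    have h3 : ((‖((μ : ℝ) : Quat)‖^2 : ℝ) : Quat) = ((μ : ℝ) : Quat) * ((μ : ℝ) : Quat) := by
      rw [Quaternion.norm_coe, Real.norm_eq_abs, ← Quaternion.coe_mul]
      congr 1
      rw [sq_abs, sq]
    rw [h2, h3, op_add, add_smul,
      show op (((μ:ℝ):Quat) * ((μ:ℝ):Quat)) = op ((μ:ℝ):Quat) * op ((μ:ℝ):Quat) from op_mul _ _,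
      ← smul_smul]
    abel
  exact not_SInv B (Rq A ((μ : ℝ) : Quat)) hT Badd Bsmul Bsa hBpos (C + |μ|)
    (by positivity) BC happrox

end NotInv
section Units
variable {V : Type*} [NormedAddCommGroup V] [Module Quatᵐᵒᵖ V] [CompleteSpace V] [RQH V]

lemma exists_unit [Nontrivial V] : ∃ φ : V, ‖φ‖ = 1 := by
  obtain ⟨x, hx⟩ := exists_ne (0 : V)
  have hxn : ‖x‖ ≠ 0 := norm_ne_zero_iff.mpr hx
  refine ⟨op ((‖x‖⁻¹ : ℝ) : Quat) • x, ?_⟩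
  rw [norm_op_smul, Quaternion.norm_coe, Real.norm_eq_abs,
    abs_of_nonneg (inv_nonneg.mpr (norm_nonneg x))]
  field_simp

lemma scaled_re (A : V → V) (hsmul : ∀ (q : Quatᵐᵒᵖ) (x : V), A (q • x) = q • A x)
    (ψ : V) (s : ℝ) (hs : inn (A ψ) ψ = ((s : ℝ) : Quat)) :
    inn (A (op ((‖ψ‖⁻¹ : ℝ) : Quat) • ψ)) (op ((‖ψ‖⁻¹ : ℝ) : Quat) • ψ)
      = ((‖ψ‖⁻¹ * (s * ‖ψ‖⁻¹) : ℝ) : Quat) := by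
  rw [hsmul, inn_smul_left, smul_right, hs, Quaternion.star_coe, ← Quaternion.coe_mul,
    ← Quaternion.coe_mul]

end Units

theorem stmt11' {V : Type*} [NormedAddCommGroup V] [Module Quatᵐᵒᵖ V] [CompleteSpace V]
    [RQH V] [Nontrivial V] (A : V → V) (hA : IsBddRL A) (hsa : IsSA A) (hpos : IsPos A) :
    ((mA A : ℝ) : Quat) ∈ sspec A ∧ ((MA A : ℝ) : Quat) ∈ sspec A := by
  obtain ⟨hadd, hsmul, C0, hC00⟩ := hA
  set C := max C0 0 with hCdef
  have hC0 : 0 ≤ C := le_max_right _ _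
  have hC : ∀ x : V, ‖A x‖ ≤ C * ‖x‖ := fun x =>
    (hC00 x).trans (mul_le_mul_of_nonneg_right (le_max_left _ _) (norm_nonneg x))
  set S : Set ℝ := { r : ℝ | ∃ φ : V, ‖φ‖ = 1 ∧ r = (inn (A φ) φ).re } with hSdef
  have hmS : mA A = sInf S := rfl
  have hMS : MA A = sSup S := rfl
  have hSne : S.Nonempty := by
    obtain ⟨φ, hφ⟩ := exists_unit (V := V)
    exact ⟨(inn (A φ) φ).re, φ, hφ, rfl⟩
  have hbddA : BddAbove S := by
    refine ⟨C, fun r hr => ?_⟩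
    obtain ⟨φ, hφ, rfl⟩ := hr
    calc (inn (A φ) φ).re ≤ ‖inn (A φ) φ‖ := re_le_norm _
    _ ≤ ‖A φ‖ * ‖φ‖ := cs_inn _ _
    _ ≤ (C * ‖φ‖) * ‖φ‖ := mul_le_mul_of_nonneg_right (hC φ) (norm_nonneg _)
    _ = C := by rw [hφ]; ring
  have hbddB : BddBelow S := by
    refine ⟨0, fun r hr => ?_⟩
    obtain ⟨φ, hφ, rfl⟩ := hr
    obtain ⟨s, hs0, hs⟩ := hpos φ
    rw [hs, Quaternion.re_coe]; exact hs0
  -- scaling bounds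
  have hscale : ∀ ψ : V, ψ ≠ 0 → ∀ s : ℝ, inn (A ψ) ψ = ((s : ℝ) : Quat) →
      mA A * ‖ψ‖^2 ≤ s ∧ s ≤ MA A * ‖ψ‖^2 := by
    intro ψ hψ s hs
    have hψn : (0:ℝ) < ‖ψ‖ := norm_pos_iff.mpr hψ
    set u : V := op ((‖ψ‖⁻¹ : ℝ) : Quat) • ψ with hu
    have hu1 : ‖u‖ = 1 := by
      rw [hu, norm_op_smul, Quaternion.norm_coe, Real.norm_eq_abs,
        abs_of_nonneg (inv_nonneg.mpr (norm_nonneg ψ))]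
      field_simp
    have hval : (inn (A u) u).re = ‖ψ‖⁻¹ * (s * ‖ψ‖⁻¹) := by
      rw [hu, scaled_re A hsmul ψ s hs, Quaternion.re_coe]
    have hmem : (inn (A u) u).re ∈ S := ⟨u, hu1, rfl⟩
    have hle1 : mA A ≤ (inn (A u) u).re := by rw [hmS]; exact csInf_le hbddB hmem
    have hle2 : (inn (A u) u).re ≤ MA A := by rw [hMS]; exact le_csSup hbddA hmem
    rw [hval] at hle1 hle2
    have hsq : ‖ψ‖⁻¹ * (s * ‖ψ‖⁻¹) * ‖ψ‖^2 = s := by rw [sq]; field_simp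
    constructor
    · have := mul_le_mul_of_nonneg_right hle1 (le_of_lt (by positivity : (0:ℝ) < ‖ψ‖^2))
      rw [hsq] at this; exact this
    · have := mul_le_mul_of_nonneg_right hle2 (le_of_lt (by positivity : (0:ℝ) < ‖ψ‖^2))
      rw [hsq] at this; exact this
  -- inner product formulas for the shifted operators
  have hinnM : ∀ ψ : V, ∀ s : ℝ, inn (A ψ) ψ = ((s : ℝ) : Quat) →
      inn (op ((MA A : ℝ) : Quat) • ψ - A ψ) ψ = ((MA A * ‖ψ‖^2 - s : ℝ) : Quat) := by
    intro ψ s hs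
    rw [inn_sub_left, inn_smul_left, norm_sq, Quaternion.star_coe, hs,
      ← Quaternion.coe_mul]
    push_cast
    ring
  have hinnm : ∀ ψ : V, ∀ s : ℝ, inn (A ψ) ψ = ((s : ℝ) : Quat) →
      inn (A ψ - op ((mA A : ℝ) : Quat) • ψ) ψ = ((s - mA A * ‖ψ‖^2 : ℝ) : Quat) := by
    intro ψ s hs
    rw [inn_sub_left, inn_smul_left, norm_sq, Quaternion.star_coe, hs,
      ← Quaternion.coe_mul]
    push_cast
    ring
  have hA00 : A 0 = 0 := additive_zero hadd
  constructor
  · -- m(A)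
    refine notinv A hadd hsmul C hC0 hC hsa (mA A)
      (fun ψ => A ψ - op ((mA A : ℝ) : Quat) • ψ) (Or.inl (fun _ => rfl)) ?_ ?_
    · intro ψ
      obtain ⟨s, hs0, hs⟩ := hpos ψ
      refine ⟨s - mA A * ‖ψ‖^2, ?_, hinnm ψ s hs⟩
      by_cases hψ : ψ = 0
      · subst hψ
        rw [hA00, inn_zero_left] at hs
        have : s = 0 := by
          have := congrArg QuaternionAlgebra.re hs
          simpa [Quaternion.re_coe, Quaternion.re_zero] using this.symm
        simp [this]
      · have := (hscale ψ hψ s hs).1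
        linarith
    · intro ε hε
      have hlt : sInf S < sInf S + ε := by linarith
      obtain ⟨r, hrS, hr⟩ := exists_lt_of_csInf_lt hSne (by rw [← hmS] at hlt ⊢; exact hlt)
      obtain ⟨φ, hφ1, rfl⟩ := hrS
      obtain ⟨s, hs0, hs⟩ := hpos φ
      have hsr : (inn (A φ) φ).re = s := by rw [hs, Quaternion.re_coe]
      refine ⟨φ, hφ1, ?_⟩
      rw [hinnm φ s hs, Quaternion.re_coe, hφ1]
      rw [hsr] at hr
      have hm : mA A ≤ sInf S := le_of_eq hmS
      nlinarith [hr]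
  · -- M(A)
    refine notinv A hadd hsmul C hC0 hC hsa (MA A)
      (fun ψ => op ((MA A : ℝ) : Quat) • ψ - A ψ) (Or.inr (fun _ => rfl)) ?_ ?_
    · intro ψ
      obtain ⟨s, hs0, hs⟩ := hpos ψ
      refine ⟨MA A * ‖ψ‖^2 - s, ?_, hinnM ψ s hs⟩
      by_cases hψ : ψ = 0
      · subst hψ
        rw [hA00, inn_zero_left] at hs
        have : s = 0 := by
          have := congrArg QuaternionAlgebra.re hs
          simpa [Quaternion.re_coe, Quaternion.re_zero] using this.symm
        simp [this]
      · have := (hscale ψ hψ s hs).2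
        linarith
    · intro ε hε
      have hlt : sSup S - ε < sSup S := by linarith
      obtain ⟨r, hrS, hr⟩ := exists_lt_of_lt_csSup hSne hlt
      obtain ⟨φ, hφ1, rfl⟩ := hrS
      obtain ⟨s, hs0, hs⟩ := hpos φ
      have hsr : (inn (A φ) φ).re = s := by rw [hs, Quaternion.re_coe]
      refine ⟨φ, hφ1, ?_⟩
      rw [hinnM φ s hs, Quaternion.re_coe, hφ1]
      rw [hsr] at hr
      have hM : MA A = sSup S := hMS
      nlinarith [hr]

/-- m(A) and M(A) belong to the S-spectrum of a positive bounded self-adjoint operator. -/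
theorem stmt11 [Nontrivial V] (A : V → V) (hA : IsBddRL A) (hsa : IsSA A) (hpos : IsPos A) :
    ((mA A : ℝ) : Quat) ∈ sspec A ∧ ((MA A : ℝ) : Quat) ∈ sspec A := by
  exact stmt11' A hA hsa hpos
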